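/- Maximum privacy is attained exactly beyond the critical rate: for every φ ∈ [0,1), P(φ) = log₂ n if and only if φ ≥ φ_crit = TV(u‖q); in particular P(φ) < log₂ n for all φ < φ_crit and P(φ) = log₂ n for all φ ∈ [φ_crit, 1). -/

import Mathlib

/-!
STATEMENT 3. Maximum privacy is attained exactly beyond the critical rate:
for every `φ ∈ [0,1)`, `P(φ) = log₂ n` iff `φ ≥ φ_crit = TV(u‖q)`;
in particular `P(φ) < log₂ n` for all `φ < φ_crit` and `P(φ) = log₂ n`
for all `φ ∈ [φ_crit, 1)`.
-/

/-- Base-2 Shannon entropy `H(t) = -∑ tᵢ log₂ tᵢ` (with `0·log₂ 0 = 0`). -/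
noncomputable def shannon {n : ℕ} (t : Fin n → ℝ) : ℝ :=
  -∑ i, t i * Real.logb 2 (t i)

/-- A pair `(s,r)` is feasible for actual profile `q` and deferral rate `φ`. -/
def Feasible {n : ℕ} (q : Fin n → ℝ) (φ : ℝ) (s r : Fin n → ℝ) : Prop :=
  (∀ i, 0 ≤ s i) ∧ (∀ i, 0 ≤ r i) ∧ (∀ i, 0 ≤ q i - s i + r i) ∧
    (∑ i, s i = φ) ∧ (∑ i, r i = φ)

/-- The privacy–deferral function `P(φ)`. -/
noncomputable def privacyDeferral {n : ℕ} (q : Fin n → ℝ) (φ : ℝ) : ℝ :=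
  sSup {x | ∃ s r, Feasible q φ s r ∧ x = shannon (fun i => q i - s i + r i)}

/-- Total variation distance `TV(p‖q) = ½ ∑ |pᵢ - qᵢ|`. -/
noncomputable def tvDist {n : ℕ} (p q : Fin n → ℝ) : ℝ :=
  (1 / 2) * ∑ i, |p i - q i|

/-- Pointwise bound: `-t log t ≤ t log c + 1/c - t` for `t ≥ 0`, `c > 0`. -/
lemma key_le {c t : ℝ} (hc : 0 < c) (ht : 0 ≤ t) :
    Real.negMulLog t ≤ t * Real.log c + 1 / c - t := by
  rcases ht.eq_or_lt with h | h
  · simp [← h]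
    positivity
  · have h1 : Real.log (1 / (c * t)) ≤ 1 / (c * t) - 1 :=
      Real.log_le_sub_one_of_pos (by positivity)
    have h2 : Real.negMulLog t = t * Real.log (1 / (c * t)) + t * Real.log c := by
      rw [Real.negMulLog, Real.log_div one_ne_zero (by positivity),
        Real.log_mul hc.ne' h.ne']
      simp; ring
    have h3 : t * (1 / (c * t)) = 1 / c := by field_simp
    nlinarith [mul_le_mul_of_nonneg_left h1 h.le]

lemma key_lt {c t : ℝ} (hc : 0 < c) (ht : 0 ≤ t) (hne : t ≠ 1 / c) :
    Real.negMulLog t < t * Real.log c + 1 / c - t := by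
  rcases ht.eq_or_lt with h | h
  · simp [← h]
    positivity
  · have hx : 1 / (c * t) ≠ 1 := by
      intro hx
      apply hne
      field_simp at hx ⊢
      linarith
    have h1 : Real.log (1 / (c * t)) < 1 / (c * t) - 1 :=
      Real.log_lt_sub_one_of_pos (by positivity) hx
    have h2 : Real.negMulLog t = t * Real.log (1 / (c * t)) + t * Real.log c := by
      rw [Real.negMulLog, Real.log_div one_ne_zero (by positivity),
        Real.log_mul hc.ne' h.ne']
      simp; ring
    have h3 : t * (1 / (c * t)) = 1 / c := by field_simp
    nlinarith [mul_lt_mul_of_pos_left h1 h]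

lemma sum_rhs {n : ℕ} (hn : 0 < n) (t : Fin n → ℝ) (h1 : ∑ i, t i = 1) :
    ∑ i, (t i * Real.log n + 1 / (n : ℝ) - t i) = Real.log n := by
  have hn' : (n : ℝ) ≠ 0 := Nat.cast_ne_zero.mpr hn.ne'
  rw [Finset.sum_sub_distrib, Finset.sum_add_distrib, ← Finset.sum_mul, h1,
    Finset.sum_const, Finset.card_univ, Fintype.card_fin, nsmul_eq_mul]
  field_simp
  ring

lemma sum_negMulLog_le {n : ℕ} (hn : 0 < n) (t : Fin n → ℝ)
    (h0 : ∀ i, 0 ≤ t i) (h1 : ∑ i, t i = 1) :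
    ∑ i, Real.negMulLog (t i) ≤ Real.log n := by
  calc ∑ i, Real.negMulLog (t i) ≤ ∑ i, (t i * Real.log n + 1 / (n : ℝ) - t i) :=
        Finset.sum_le_sum fun i _ => key_le (Nat.cast_pos.mpr hn) (h0 i)
    _ = Real.log n := sum_rhs hn t h1

lemma sum_negMulLog_lt {n : ℕ} (hn : 0 < n) (t : Fin n → ℝ)
    (h0 : ∀ i, 0 ≤ t i) (h1 : ∑ i, t i = 1) {j : Fin n} (hj : t j ≠ 1 / (n : ℝ)) :
    ∑ i, Real.negMulLog (t i) < Real.log n := by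
  calc ∑ i, Real.negMulLog (t i) < ∑ i, (t i * Real.log n + 1 / (n : ℝ) - t i) :=
        Finset.sum_lt_sum (fun i _ => key_le (Nat.cast_pos.mpr hn) (h0 i))
          ⟨j, Finset.mem_univ j, key_lt (Nat.cast_pos.mpr hn) (h0 j) hj⟩
    _ = Real.log n := sum_rhs hn t h1

lemma shannon_eq {n : ℕ} (t : Fin n → ℝ) :
    shannon t = (∑ i, Real.negMulLog (t i)) / Real.log 2 := by
  simp only [shannon, Real.negMulLog, Real.logb, Finset.sum_div, ← Finset.sum_neg_distrib]
  exact Finset.sum_congr rfl fun i _ => by ring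

lemma shannon_unif {n : ℕ} (hn : 0 < n) :
    shannon (fun _ : Fin n => 1 / (n : ℝ)) = Real.logb 2 n := by
  have hn' : (n : ℝ) ≠ 0 := Nat.cast_ne_zero.mpr hn.ne'
  simp only [shannon, one_div, Real.logb_inv, Finset.sum_const, Finset.card_univ,
    Fintype.card_fin, nsmul_eq_mul, mul_neg]
  field_simp

lemma shannon_le {n : ℕ} (hn : 0 < n) (t : Fin n → ℝ)
    (h0 : ∀ i, 0 ≤ t i) (h1 : ∑ i, t i = 1) : shannon t ≤ Real.logb 2 n := by
  rw [shannon_eq, Real.logb]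
  exact (div_le_div_iff_of_pos_right (Real.log_pos one_lt_two)).mpr (sum_negMulLog_le hn t h0 h1)

lemma shannon_lt {n : ℕ} (hn : 0 < n) (t : Fin n → ℝ)
    (h0 : ∀ i, 0 ≤ t i) (h1 : ∑ i, t i = 1) {j : Fin n} (hj : t j ≠ 1 / (n : ℝ)) :
    shannon t < Real.logb 2 n := by
  rw [shannon_eq, Real.logb]
  exact (div_lt_div_iff_of_pos_right (Real.log_pos one_lt_two)).mpr (sum_negMulLog_lt hn t h0 h1 hj)

lemma max_abs_eq (x : ℝ) : max x 0 = (|x| + x) / 2 := by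
  rcases le_or_gt x 0 with h | h
  · rw [max_eq_right h, abs_of_nonpos h]; ring
  · rw [max_eq_left h.le, abs_of_pos h]; ring

/-- Achievability: if `TV(u‖q) ≤ φ` then the uniform profile is attainable. -/
lemma achievable {n : ℕ} (hn : 2 ≤ n) (q : Fin n → ℝ) (hq0 : ∀ i, 0 ≤ q i)
    (hq1 : ∑ i, q i = 1) (φ : ℝ) (hφ : tvDist (fun _ => 1 / (n : ℝ)) q ≤ φ) :
    ∃ s r, Feasible q φ s r ∧
      Real.logb 2 n = shannon (fun i => q i - s i + r i) := by
  have hn0 : 0 < n := lt_of_lt_of_le two_pos hn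
  have hn' : (n : ℝ) ≠ 0 := Nat.cast_ne_zero.mpr hn0.ne'
  set T := tvDist (fun _ => 1 / (n : ℝ)) q with hT
  set δ := φ - T with hδ
  have hδ0 : 0 ≤ δ := by simp [hδ]; linarith
  have i0 : Fin n := ⟨0, hn0⟩
  refine ⟨fun i => max (q i - 1 / (n : ℝ)) 0 + (if i = i0 then δ else 0),
    fun i => max (1 / (n : ℝ) - q i) 0 + (if i = i0 then δ else 0), ?_, ?_⟩
  · have ht : ∀ i, q i - (max (q i - 1 / (n : ℝ)) 0 + (if i = i0 then δ else 0))
        + (max (1 / (n : ℝ) - q i) 0 + (if i = i0 then δ else 0)) = 1 / (n : ℝ) := by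
      intro i
      rcases le_total (q i) (1 / (n : ℝ)) with h | h
      · rw [max_eq_right (by linarith), max_eq_left (by linarith)]; ring
      · rw [max_eq_left (by linarith), max_eq_right (by linarith)]; ring
    have hsum1 : ∑ i, max (q i - 1 / (n : ℝ)) 0 = T := by
      have : ∀ i, max (q i - 1 / (n : ℝ)) 0 = (|1 / (n : ℝ) - q i| + (q i - 1 / (n : ℝ))) / 2 := by
        intro i; rw [max_abs_eq, abs_sub_comm]
      rw [Finset.sum_congr rfl fun i _ => this i]
      rw [← Finset.sum_div, Finset.sum_add_distrib, Finset.sum_sub_distrib, hq1,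
        Finset.sum_const, Finset.card_univ, Fintype.card_fin, nsmul_eq_mul]
      rw [hT, tvDist]
      field_simp
      ring
    have hsum2 : ∑ i, max (1 / (n : ℝ) - q i) 0 = T := by
      have : ∀ i, max (1 / (n : ℝ) - q i) 0 = (|1 / (n : ℝ) - q i| + (1 / (n : ℝ) - q i)) / 2 := by
        intro i; rw [max_abs_eq]
      rw [Finset.sum_congr rfl fun i _ => this i]
      rw [← Finset.sum_div, Finset.sum_add_distrib, Finset.sum_sub_distrib, hq1,
        Finset.sum_const, Finset.card_univ, Fintype.card_fin, nsmul_eq_mul]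
      rw [hT, tvDist]
      field_simp
      ring
    have hind : ∑ i, (if i = i0 then δ else 0) = δ := by
      simp [Finset.sum_ite_eq']
    refine ⟨fun i => add_nonneg (le_max_right _ _) (by positivity), 
      fun i => add_nonneg (le_max_right _ _) (by positivity), 
      fun i => by rw [ht i]; positivity, ?_, ?_⟩
    · rw [Finset.sum_add_distrib, hsum1, hind]; simp [hδ]
    · rw [Finset.sum_add_distrib, hsum2, hind]; simp [hδ]
  · have ht : (fun i => q i - (max (q i - 1 / (n : ℝ)) 0 + (if i = i0 then δ else 0))
        + (max (1 / (n : ℝ) - q i) 0 + (if i = i0 then δ else 0)))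
        = fun _ : Fin n => 1 / (n : ℝ) := by
      funext i
      rcases le_total (q i) (1 / (n : ℝ)) with h | h
      · rw [max_eq_right (by linarith), max_eq_left (by linarith)]; ring
      · rw [max_eq_left (by linarith), max_eq_right (by linarith)]; ring
    rw [ht, shannon_unif hn0]

theorem max_privacy_iff_ge_critical_rate {n : ℕ} (hn : 2 ≤ n)
    (q : Fin n → ℝ) (hq0 : ∀ i, 0 ≤ q i) (hq1 : ∑ i, q i = 1) :
    (∀ φ : ℝ, 0 ≤ φ → φ < 1 →
      (privacyDeferral q φ = Real.logb 2 n ↔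
        tvDist (fun _ => 1 / (n : ℝ)) q ≤ φ)) ∧
    (∀ φ : ℝ, 0 ≤ φ → φ < tvDist (fun _ => 1 / (n : ℝ)) q →
      privacyDeferral q φ < Real.logb 2 n) ∧
    (∀ φ : ℝ, tvDist (fun _ => 1 / (n : ℝ)) q ≤ φ → φ < 1 →
      privacyDeferral q φ = Real.logb 2 n) := by
  have hn0 : 0 < n := lt_of_lt_of_le two_pos hn
  -- upper bound on every element of the attainable set
  have hub : ∀ φ : ℝ, ∀ x ∈ {x | ∃ s r, Feasible q φ s r ∧
      x = shannon (fun i => q i - s i + r i)}, x ≤ Real.logb 2 n := by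
    rintro φ x ⟨s, r, ⟨hs, hr, ht0, hss, hrs⟩, rfl⟩
    refine shannon_le hn0 _ ht0 ?_
    simp only [Finset.sum_add_distrib, Finset.sum_sub_distrib, hq1, hss, hrs]
    ring
  -- Part C : achievability
  have partC : ∀ φ : ℝ, tvDist (fun _ => 1 / (n : ℝ)) q ≤ φ →
      privacyDeferral q φ = Real.logb 2 n := by
    intro φ hφ
    obtain ⟨s, r, hfeas, heq⟩ := achievable hn q hq0 hq1 φ hφ
    have hmem : Real.logb 2 n ∈ {x | ∃ s r, Feasible q φ s r ∧
        x = shannon (fun i => q i - s i + r i)} := ⟨s, r, hfeas, heq⟩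
    exact le_antisymm (csSup_le ⟨_, hmem⟩ (hub φ)) (le_csSup ⟨_, hub φ⟩ hmem)
  -- Part B : strictness via compactness
  have partB : ∀ φ : ℝ, 0 ≤ φ → φ < tvDist (fun _ => 1 / (n : ℝ)) q →
      privacyDeferral q φ < Real.logb 2 n := by
    intro φ hφ0 hφ
    set K : Set ((Fin n → ℝ) × (Fin n → ℝ)) := {p | Feasible q φ p.1 p.2} with hK
    have hKne : K.Nonempty := by
      refine ⟨(fun i => φ * q i, fun i => φ * q i), ?_⟩
      exact ⟨fun i => mul_nonneg hφ0 (hq0 i), fun i => mul_nonneg hφ0 (hq0 i),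
        fun i => by simpa using hq0 i,
        by rw [← Finset.mul_sum, hq1, mul_one],
        by rw [← Finset.mul_sum, hq1, mul_one]⟩
    have hKcl : IsClosed K := by
      have : K = (⋂ i, {p : (Fin n → ℝ) × (Fin n → ℝ) | 0 ≤ p.1 i}) ∩
          ((⋂ i, {p : (Fin n → ℝ) × (Fin n → ℝ) | 0 ≤ p.2 i}) ∩
          ((⋂ i, {p : (Fin n → ℝ) × (Fin n → ℝ) | 0 ≤ q i - p.1 i + p.2 i}) ∩
          ({p : (Fin n → ℝ) × (Fin n → ℝ) | ∑ i, p.1 i = φ} ∩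
           {p : (Fin n → ℝ) × (Fin n → ℝ) | ∑ i, p.2 i = φ}))) := by
        ext p
        simp only [hK, Feasible, Set.mem_setOf_eq, Set.mem_inter_iff, Set.mem_iInter]
      rw [this]
      refine (isClosed_iInter fun i => isClosed_le continuous_const (by fun_prop)).inter
        ((isClosed_iInter fun i => isClosed_le continuous_const (by fun_prop)).inter
        ((isClosed_iInter fun i => isClosed_le continuous_const (by fun_prop)).inter
        ((isClosed_eq (by fun_prop) continuous_const).inter
         (isClosed_eq (by fun_prop) continuous_const))))
    have hKsub : K ⊆ Set.Icc ((0, 0) : (Fin n → ℝ) × (Fin n → ℝ))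
        ((fun _ => φ), (fun _ => φ)) := by
      rintro ⟨s, r⟩ ⟨hs, hr, ht0, hss, hrs⟩
      refine ⟨⟨fun i => hs i, fun i => hr i⟩, ⟨fun i => ?_, fun i => ?_⟩⟩
      · calc s i ≤ ∑ j, s j := Finset.single_le_sum (fun j _ => hs j) (Finset.mem_univ i)
          _ = φ := hss
      · calc r i ≤ ∑ j, r j := Finset.single_le_sum (fun j _ => hr j) (Finset.mem_univ i)
          _ = φ := hrs
    have hKcp : IsCompact K := IsCompact.of_isClosed_subset isCompact_Icc hKcl hKsub
    have hgcont : Continuous (fun p : (Fin n → ℝ) × (Fin n → ℝ) =>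
        shannon (fun i => q i - p.1 i + p.2 i)) := by
      have : (fun p : (Fin n → ℝ) × (Fin n → ℝ) =>
          shannon (fun i => q i - p.1 i + p.2 i)) =
          fun p => (∑ i, Real.negMulLog (q i - p.1 i + p.2 i)) / Real.log 2 := by
        funext p; rw [shannon_eq]
      rw [this]
      refine Continuous.div_const ?_ _
      refine continuous_finset_sum _ fun i _ => ?_
      exact Real.continuous_negMulLog.comp (by fun_prop)
    have hA : {x | ∃ s r, Feasible q φ s r ∧
        x = shannon (fun i => q i - s i + r i)} =
        (fun p : (Fin n → ℝ) × (Fin n → ℝ) =>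
          shannon (fun i => q i - p.1 i + p.2 i)) '' K := by
      ext x
      constructor
      · rintro ⟨s, r, hf, rfl⟩; exact ⟨(s, r), hf, rfl⟩
      · rintro ⟨⟨s, r⟩, hf, rfl⟩; exact ⟨s, r, hf, rfl⟩
    have hAcp : IsCompact ((fun p : (Fin n → ℝ) × (Fin n → ℝ) =>
        shannon (fun i => q i - p.1 i + p.2 i)) '' K) := hKcp.image hgcont
    have hAne : ((fun p : (Fin n → ℝ) × (Fin n → ℝ) =>
        shannon (fun i => q i - p.1 i + p.2 i)) '' K).Nonempty := hKne.image _
    have hmem := hAcp.sSup_mem hAne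
    rw [privacyDeferral, hA]
    obtain ⟨⟨s, r⟩, hf, heq⟩ := hmem
    rw [← heq]
    obtain ⟨hs, hr, ht0, hss, hrs⟩ := hf
    have ht1 : ∑ i, (q i - s i + r i) = 1 := by
      simp only [Finset.sum_add_distrib, Finset.sum_sub_distrib, hq1, hss, hrs]; ring
    -- the apparent profile cannot be uniform
    have hnu : ∃ j, q j - s j + r j ≠ 1 / (n : ℝ) := by
      by_contra h
      push_neg at h
      have : tvDist (fun _ => 1 / (n : ℝ)) q ≤ φ := by
        rw [tvDist]
        have hb : ∀ i, |1 / (n : ℝ) - q i| ≤ s i + r i := by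
          intro i
          have : (1 : ℝ) / n - q i = r i - s i := by
            have := h i; linarith
          rw [this]
          calc |r i - s i| ≤ |r i| + |s i| := abs_sub _ _
            _ = s i + r i := by rw [abs_of_nonneg (hr i), abs_of_nonneg (hs i)]; ring
        calc (1/2 : ℝ) * ∑ i, |1 / (n : ℝ) - q i| ≤ (1/2) * ∑ i, (s i + r i) :=
              mul_le_mul_of_nonneg_left (Finset.sum_le_sum fun i _ => hb i) (by norm_num)
          _ = φ := by rw [Finset.sum_add_distrib, hss, hrs]; ring
      linarith
    obtain ⟨j, hj⟩ := hnu
    exact shannon_lt hn0 _ ht0 ht1 hj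
  refine ⟨fun φ hφ0 hφ1 => ⟨fun h => ?_, fun h => partC φ h⟩, partB,
    fun φ h _ => partC φ h⟩
  by_contra hc
  push_neg at hc
  exact absurd h (ne_of_lt (partB φ hφ0 hc))
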